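/- Let K be a field of characteristic zero and α₃, α₂, α₁, α₀, β₁, β₀ ∈ K. Let L be the D3 operator with parameters (α₃, α₂, α₁, α₀; β₁, β₀) and let L̃ be its formal derivative with respect to D, namely L̃ = 3D² + t(α₃(3D² + 3D + 1/2) + β₁) + t²(3α₂(D+1)² + β₀) + α₁t³(3D² + 9D + 13/2) + α₀t⁴(3D² + 12D + 11). Suppose φ₀ ∈ K[[t]] has constant coefficient 1 and L(φ₀) = 0, and ψ ∈ K[[t]] has constant coefficient 0 and L(ψ) + L̃(φ₀) = 0 (so that (log t)·φ₀ + ψ is formally annihilated by L). Then (1 + α₃t + α₂t² + α₁t³ + α₀t⁴)·(φ₀² + (Dψ)·φ₀ − ψ·(Dφ₀))² = φ₀² in K[[t]]. -/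

import Mathlib

open PowerSeries

/-- The Euler operator `D = t·d/dt` on formal power series: `D(tⁿ) = n·tⁿ`. -/
noncomputable def eulerD {K : Type*} [Semiring K] (f : PowerSeries K) : PowerSeries K :=
  PowerSeries.mk fun n => (n : K) * PowerSeries.coeff n f

/-- The operator `D + c`. -/
noncomputable def eulerDplus {K : Type*} [Semiring K] (c : K) (f : PowerSeries K) :
    PowerSeries K :=
  eulerD f + C c * f

/-- The D3 operator
`D³ + t(D + 1/2)(α₃(D² + D) + β₁) + t²(D+1)(α₂(D+1)² + β₀)
  + α₁t³(D+2)(D + 3/2)(D+1) + α₀t⁴(D+3)(D+2)(D+1)`. -/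
noncomputable def D3op {K : Type*} [Field K] (α₃ α₂ α₁ α₀ β₁ β₀ : K) (φ : PowerSeries K) :
    PowerSeries K :=
  eulerD (eulerD (eulerD φ))
    + X * eulerDplus (1 / 2) (C α₃ * (eulerD (eulerD φ) + eulerD φ) + C β₁ * φ)
    + X ^ 2 * eulerDplus 1 (C α₂ * eulerDplus 1 (eulerDplus 1 φ) + C β₀ * φ)
    + C α₁ * X ^ 3 * eulerDplus 2 (eulerDplus (3 / 2) (eulerDplus 1 φ))
    + C α₀ * X ^ 4 * eulerDplus 3 (eulerDplus 2 (eulerDplus 1 φ))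

/-- The formal derivative of the D3 operator with respect to `D`:
`L̃ = 3D² + t(α₃(3D² + 3D + 1/2) + β₁) + t²(3α₂(D+1)² + β₀)
  + α₁t³(3D² + 9D + 13/2) + α₀t⁴(3D² + 12D + 11)`. -/
noncomputable def D3til {K : Type*} [Field K] (α₃ α₂ α₁ α₀ β₁ β₀ : K) (φ : PowerSeries K) :
    PowerSeries K :=
  3 * eulerD (eulerD φ)
    + X * (C α₃ * (3 * eulerD (eulerD φ) + 3 * eulerD φ + C (1 / 2 : K) * φ) + C β₁ * φ)
    + X ^ 2 * (3 * (C α₂ * eulerDplus 1 (eulerDplus 1 φ)) + C β₀ * φ)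
    + C α₁ * X ^ 3 * (3 * eulerD (eulerD φ) + 9 * eulerD φ + C (13 / 2 : K) * φ)
    + C α₀ * X ^ 4 * (3 * eulerD (eulerD φ) + 12 * eulerD φ + 11 * φ)

section EulerBasics

variable {K : Type*} [Semiring K]

lemma coeff_eulerD (n : ℕ) (f : PowerSeries K) :
    coeff n (eulerD f) = (n : K) * coeff n f := by
  simp [eulerD]

lemma constantCoeff_eulerD (f : PowerSeries K) : constantCoeff (eulerD f) = 0 := by
  rw [← coeff_zero_eq_constantCoeff, coeff_eulerD]; simp

lemma eulerD_add (f g : PowerSeries K) : eulerD (f + g) = eulerD f + eulerD g := by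
  ext n; simp [coeff_eulerD, mul_add]

lemma eulerD_C (r : K) : eulerD (C r) = 0 := by
  ext n
  rcases n with _ | n <;> simp [coeff_eulerD, coeff_C]

lemma eulerD_one : eulerD (1 : PowerSeries K) = 0 := by
  rw [← map_one (C (R := K))]; exact eulerD_C 1

lemma eulerD_ofNat (n : ℕ) [n.AtLeastTwo] :
    eulerD (no_index (OfNat.ofNat n) : PowerSeries K) = 0 := by
  rw [← map_ofNat (C (R := K)) n]; exact eulerD_C _

lemma eulerD_X : eulerD (X : PowerSeries K) = X := by
  ext n
  rcases n with _ | n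
  · simp [coeff_eulerD]
  · simp [coeff_eulerD, coeff_X]
    rcases eq_or_ne n 0 with h | h <;> simp [h]

lemma eulerD_X_pow (k : ℕ) : eulerD ((X : PowerSeries K) ^ k) = (k : PowerSeries K) * X ^ k := by
  have hc : (k : PowerSeries K) = C (k : K) := by simp
  ext n
  rw [coeff_eulerD, hc, coeff_C_mul, coeff_X_pow]
  rcases eq_or_ne n k with h | h
  · subst h; simp
  · simp [h]

lemma eulerD_mul {K : Type*} [CommSemiring K] (f g : PowerSeries K) :
    eulerD (f * g) = eulerD f * g + f * eulerD g := by
  ext n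
  rw [coeff_eulerD, map_add, coeff_mul, coeff_mul, coeff_mul, Finset.mul_sum,
    ← Finset.sum_add_distrib]
  apply Finset.sum_congr rfl
  intro p hp
  rw [Finset.HasAntidiagonal.mem_antidiagonal] at hp
  rw [coeff_eulerD, coeff_eulerD, ← hp]
  push_cast
  ring

lemma eulerD_C_mul {K : Type*} [CommSemiring K] (r : K) (f : PowerSeries K) :
    eulerD (C r * f) = C r * eulerD f := by
  ext n; simp [coeff_eulerD, coeff_C_mul]; ring

lemma eulerD_sub {K : Type*} [Ring K] (f g : PowerSeries K) :
    eulerD (f - g) = eulerD f - eulerD g := by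
  ext n; simp [coeff_eulerD, mul_sub]

lemma eulerD_two {K : Type*} [Field K] : eulerD (2 : PowerSeries K) = 0 := eulerD_ofNat 2

lemma eq_zero_of_eulerD_eq_zero {K : Type*} [Field K] [CharZero K] (g : PowerSeries K)
    (h : eulerD g = 0) (h0 : constantCoeff g = 0) : g = 0 := by
  ext n
  rcases n with _ | n
  · simpa using h0
  · have := congrArg (coeff (n + 1)) h
    rw [coeff_eulerD] at this
    simp only [map_zero] at this ⊢
    have hn : (((n + 1 : ℕ)) : K) ≠ 0 := Nat.cast_ne_zero.2 (Nat.succ_ne_zero n)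
    exact (mul_eq_zero.1 this).resolve_left hn

lemma eulerD_cancel {K : Type*} [Field K] [CharZero K] (A B g : PowerSeries K)
    (hA : constantCoeff A = 2) (hB : constantCoeff B = 0)
    (hg : constantCoeff g = 0) (heq : A * eulerD g = B * g) : g = 0 := by
  have key : ∀ n, coeff n g = 0 := by
    intro n
    induction n using Nat.strong_induction_on with
    | _ n ih =>
      rcases n with _ | n
      · simpa using hg
      · have hz : ∀ p : ℕ × ℕ, p ∈ Finset.HasAntidiagonal.antidiagonal (n + 1) → p ≠ (0, n + 1) →
            coeff p.2 g = 0 := by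
          rintro ⟨a, c⟩ hp hne
          rw [Finset.HasAntidiagonal.mem_antidiagonal] at hp
          have hc : c < n + 1 := by
            rcases Nat.lt_or_ge c (n + 1) with h | h
            · exact h
            · exfalso
              have hc2 : c = n + 1 := by omega
              have ha : a = 0 := by omega
              exact hne (by simp [ha, hc2])
          exact ih _ hc
        have h1 := congrArg (coeff (n + 1)) heq
        rw [coeff_mul, coeff_mul] at h1
        have e1 : ∑ p ∈ Finset.HasAntidiagonal.antidiagonal (n + 1), coeff p.1 A * coeff p.2 (eulerD g)
            = coeff 0 A * coeff (n + 1) (eulerD g) :=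
          Finset.sum_eq_single (0, n + 1)
            (fun b hb hbn => by rw [coeff_eulerD, hz b hb hbn, mul_zero, mul_zero])
            (fun hmem => absurd (Finset.HasAntidiagonal.mem_antidiagonal.2 (by simp)) hmem)
        have e2 : ∑ p ∈ Finset.HasAntidiagonal.antidiagonal (n + 1), coeff p.1 B * coeff p.2 g
            = coeff 0 B * coeff (n + 1) g :=
          Finset.sum_eq_single (0, n + 1)
            (fun b hb hbn => by rw [hz b hb hbn, mul_zero])
            (fun hmem => absurd (Finset.HasAntidiagonal.mem_antidiagonal.2 (by simp)) hmem)
        rw [e1, e2, coeff_eulerD] at h1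
        rw [coeff_zero_eq_constantCoeff, hA, hB, zero_mul] at h1
        have hne2 : ((n + 1 : ℕ) : K) ≠ 0 := Nat.cast_ne_zero.2 (Nat.succ_ne_zero n)
        rcases mul_eq_zero.1 h1 with h' | h'
        · exact absurd h' two_ne_zero
        · exact (mul_eq_zero.1 h').resolve_left hne2
  ext n
  rw [key n, map_zero]

end EulerBasics

section Keys

variable {K : Type*} [Field K] [CharZero K] (α₃ α₂ α₁ α₀ β₁ β₀ : K)

lemma rel_half : (2 : PowerSeries K) * C (1 / 2 : K) = 1 := by
  rw [show (2 : PowerSeries K) = C (2 : K) from (map_ofNat (C (R := K)) 2).symm, ← map_mul]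
  norm_num

lemma rel_threehalf : (2 : PowerSeries K) * C (3 / 2 : K) = 3 := by
  rw [show (2 : PowerSeries K) = C (2 : K) from (map_ofNat (C (R := K)) 2).symm, ← map_mul,
    show (3 : PowerSeries K) = C (3 : K) from (map_ofNat (C (R := K)) 3).symm]
  norm_num

lemma rel_thirteenhalf : (2 : PowerSeries K) * C (13 / 2 : K) = 13 := by
  rw [show (2 : PowerSeries K) = C (2 : K) from (map_ofNat (C (R := K)) 2).symm, ← map_mul,
    show (13 : PowerSeries K) = C (13 : K) from (map_ofNat (C (R := K)) 13).symm]
  norm_num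

lemma key1 (φ : PowerSeries K) :
    2 * D3op α₃ α₂ α₁ α₀ β₁ β₀ φ =
      2 * ((1 + C α₃ * X + C α₂ * X ^ 2 + C α₁ * X ^ 3 + C α₀ * X ^ 4)
          * eulerD (eulerD (eulerD φ)))
      + 3 * ((C α₃ * X + 2 * (C α₂ * X ^ 2) + 3 * (C α₁ * X ^ 3) + 4 * (C α₀ * X ^ 4))
          * eulerD (eulerD φ))
      + ((C α₃ + 2 * C β₁) * X + (6 * C α₂ + 2 * C β₀) * X ^ 2
          + 13 * (C α₁ * X ^ 3) + 22 * (C α₀ * X ^ 4)) * eulerD φ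
      + (C β₁ * X + (2 * C α₂ + 2 * C β₀) * X ^ 2 + 6 * (C α₁ * X ^ 3)
          + 12 * (C α₀ * X ^ 4)) * φ := by
  simp only [D3op, eulerDplus, eulerD_add, eulerD_C_mul, eulerD_mul, eulerD_ofNat, eulerD_two,
    eulerD_C, mul_zero, zero_mul, zero_add, add_zero, map_one, map_ofNat, one_mul]
  linear_combination (X * (C α₃ * (eulerD (eulerD φ) + eulerD φ) + C β₁ * φ)) * rel_half (K := K)
    + (C α₁ * X ^ 3 * (eulerD (eulerD φ) + 3 * eulerD φ + 2 * φ)) * rel_threehalf (K := K)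

lemma key2 (φ : PowerSeries K) :
    2 * D3til α₃ α₂ α₁ α₀ β₁ β₀ φ =
      6 * ((1 + C α₃ * X + C α₂ * X ^ 2 + C α₁ * X ^ 3 + C α₀ * X ^ 4)
          * eulerD (eulerD φ))
      + 6 * ((C α₃ * X + 2 * (C α₂ * X ^ 2) + 3 * (C α₁ * X ^ 3) + 4 * (C α₀ * X ^ 4))
          * eulerD φ)
      + ((C α₃ + 2 * C β₁) * X + (6 * C α₂ + 2 * C β₀) * X ^ 2
          + 13 * (C α₁ * X ^ 3) + 22 * (C α₀ * X ^ 4)) * φ := by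
  simp only [D3til, eulerDplus, eulerD_add, eulerD_C_mul, eulerD_mul, eulerD_ofNat, eulerD_two,
    eulerD_C, mul_zero, zero_mul, zero_add, add_zero, map_one, map_ofNat, one_mul]
  linear_combination (C α₃ * X * φ) * rel_half (K := K)
    + (C α₁ * X ^ 3 * φ) * rel_thirteenhalf (K := K)

end Keys

set_option linter.unusedSectionVars false

section Idents

variable {K : Type*} [Field K] [CharZero K]

lemma ident1 (F F1 F2 F3 B C2 u : PowerSeries K)
    (hF : eulerD F = F1) (hF1 : eulerD F1 = F2) (hF2 : eulerD F2 = F3)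
    (hB : eulerD B = 2 * C2 + F3) :
    eulerD (4 * (F * (u * eulerD (eulerD u))) - 2 * (F * (eulerD u * eulerD u))
        + 2 * (F1 * (u * eulerD u)) + (B - F2) * (u * u))
      = 2 * (u * (2 * (F * eulerD (eulerD (eulerD u))) + 3 * (F1 * eulerD (eulerD u))
        + B * eulerD u + C2 * u)) := by
  simp only [eulerD_add, eulerD_sub, eulerD_mul, eulerD_ofNat, eulerD_two, hF, hF1, hF2, hB,
    zero_mul, zero_add, add_zero, mul_zero]
  ring

lemma ident2 (F F1 F2 F3 B C2 u v : PowerSeries K)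
    (hF : eulerD F = F1) (hF1 : eulerD F1 = F2) (hF2 : eulerD F2 = F3)
    (hB : eulerD B = 2 * C2 + F3) :
    eulerD (2 * (F * (v * eulerD (eulerD u))) - 2 * (F * (eulerD u * eulerD v))
        + 2 * (F * (u * eulerD (eulerD v))) + F1 * (u * eulerD v) + F1 * (eulerD u * v)
        + (B - F2) * (u * v) + 2 * (F * (u * eulerD u)) + F1 * (u * u))
      + (4 * (F * (u * eulerD (eulerD u))) - 2 * (F * (eulerD u * eulerD u))
        + 2 * (F1 * (u * eulerD u)) + (B - F2) * (u * u))
      = u * ((2 * (F * eulerD (eulerD (eulerD v))) + 3 * (F1 * eulerD (eulerD v))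
            + B * eulerD v + C2 * v)
          + (6 * (F * eulerD (eulerD u)) + 6 * (F1 * eulerD u) + B * u))
        + v * (2 * (F * eulerD (eulerD (eulerD u))) + 3 * (F1 * eulerD (eulerD u))
            + B * eulerD u + C2 * u) := by
  simp only [eulerD_add, eulerD_sub, eulerD_mul, eulerD_ofNat, eulerD_two, hF, hF1, hF2, hB,
    zero_mul, zero_add, add_zero, mul_zero]
  ring

lemma ident3 (F F1 F2 B u v Y H Q1 Q2 : PowerSeries K) (hF : eulerD F = F1)
    (hY : Y = u * u + eulerD v * u - v * eulerD u)
    (hH : H = F * (Y * Y) - u * u)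
    (hQ1 : Q1 = 4 * (F * (u * eulerD (eulerD u))) - 2 * (F * (eulerD u * eulerD u))
        + 2 * (F1 * (u * eulerD u)) + (B - F2) * (u * u))
    (hQ2 : Q2 = 2 * (F * (v * eulerD (eulerD u))) - 2 * (F * (eulerD u * eulerD v))
        + 2 * (F * (u * eulerD (eulerD v))) + F1 * (u * eulerD v) + F1 * (eulerD u * v)
        + (B - F2) * (u * v) + 2 * (F * (u * eulerD u)) + F1 * (u * u)) :
    2 * (F * (u * eulerD H)) = 4 * (F * (eulerD u * H))
      + 2 * (F * (u * (Y * Q2))) - 2 * (F * (v * (Y * Q1))) := by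
  subst hY hH hQ1 hQ2
  simp only [eulerD_add, eulerD_sub, eulerD_mul, eulerD_ofNat, eulerD_two, hF,
    zero_mul, zero_add, add_zero, mul_zero]
  ring

end Idents

set_option maxHeartbeats 2000000 in
theorem stmt_17 {K : Type*} [Field K] [CharZero K] (α₃ α₂ α₁ α₀ β₁ β₀ : K)
    (φ₀ ψ : PowerSeries K)
    (hφ₀ : PowerSeries.constantCoeff φ₀ = 1)
    (hψ : PowerSeries.constantCoeff ψ = 0)
    (hL : D3op α₃ α₂ α₁ α₀ β₁ β₀ φ₀ = 0)
    (hLψ : D3op α₃ α₂ α₁ α₀ β₁ β₀ ψ + D3til α₃ α₂ α₁ α₀ β₁ β₀ φ₀ = 0) :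
    (1 + C α₃ * X + C α₂ * X ^ 2 + C α₁ * X ^ 3 + C α₀ * X ^ 4)
      * (φ₀ ^ 2 + eulerD ψ * φ₀ - ψ * eulerD φ₀) ^ 2 = φ₀ ^ 2 := by
  -- explicit coefficient polynomials
  have hdF : eulerD (1 + C α₃ * X + C α₂ * X ^ 2 + C α₁ * X ^ 3 + C α₀ * X ^ 4)
      = C α₃ * X + 2 * (C α₂ * X ^ 2) + 3 * (C α₁ * X ^ 3) + 4 * (C α₀ * X ^ 4) := by
    simp only [eulerD_add, eulerD_C_mul, eulerD_one, eulerD_X, eulerD_X_pow, Nat.cast_ofNat]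
    ring
  have hdF1 : eulerD (C α₃ * X + 2 * (C α₂ * X ^ 2) + 3 * (C α₁ * X ^ 3)
        + 4 * (C α₀ * X ^ 4))
      = C α₃ * X + 4 * (C α₂ * X ^ 2) + 9 * (C α₁ * X ^ 3) + 16 * (C α₀ * X ^ 4) := by
    simp only [eulerD_add, eulerD_C_mul, eulerD_mul, eulerD_ofNat, eulerD_two, eulerD_C,
      eulerD_X, eulerD_X_pow, Nat.cast_ofNat, zero_mul, zero_add, mul_zero, add_zero]
    ring
  have hdF2 : eulerD (C α₃ * X + 4 * (C α₂ * X ^ 2) + 9 * (C α₁ * X ^ 3)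
        + 16 * (C α₀ * X ^ 4))
      = C α₃ * X + 8 * (C α₂ * X ^ 2) + 27 * (C α₁ * X ^ 3) + 64 * (C α₀ * X ^ 4) := by
    simp only [eulerD_add, eulerD_C_mul, eulerD_mul, eulerD_ofNat, eulerD_two, eulerD_C,
      eulerD_X, eulerD_X_pow, Nat.cast_ofNat, zero_mul, zero_add, mul_zero, add_zero]
    ring
  have hdB : eulerD ((C α₃ + 2 * C β₁) * X + (6 * C α₂ + 2 * C β₀) * X ^ 2
        + 13 * (C α₁ * X ^ 3) + 22 * (C α₀ * X ^ 4))
      = 2 * (C β₁ * X + (2 * C α₂ + 2 * C β₀) * X ^ 2 + 6 * (C α₁ * X ^ 3)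
          + 12 * (C α₀ * X ^ 4))
        + (C α₃ * X + 8 * (C α₂ * X ^ 2) + 27 * (C α₁ * X ^ 3)
          + 64 * (C α₀ * X ^ 4)) := by
    simp only [eulerD_add, eulerD_C_mul, eulerD_mul, eulerD_ofNat, eulerD_two, eulerD_C,
      eulerD_X, eulerD_X_pow, Nat.cast_ofNat, zero_mul, zero_add, mul_zero, add_zero]
    ring
  -- the two second-order consequences of the hypotheses
  have hE1 : 2 * ((1 + C α₃ * X + C α₂ * X ^ 2 + C α₁ * X ^ 3 + C α₀ * X ^ 4)
          * eulerD (eulerD (eulerD φ₀)))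
      + 3 * ((C α₃ * X + 2 * (C α₂ * X ^ 2) + 3 * (C α₁ * X ^ 3) + 4 * (C α₀ * X ^ 4))
          * eulerD (eulerD φ₀))
      + ((C α₃ + 2 * C β₁) * X + (6 * C α₂ + 2 * C β₀) * X ^ 2
          + 13 * (C α₁ * X ^ 3) + 22 * (C α₀ * X ^ 4)) * eulerD φ₀
      + (C β₁ * X + (2 * C α₂ + 2 * C β₀) * X ^ 2 + 6 * (C α₁ * X ^ 3)
          + 12 * (C α₀ * X ^ 4)) * φ₀ = 0 := by
    linear_combination 2 * hL - key1 α₃ α₂ α₁ α₀ β₁ β₀ φ₀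
  have hE2 : (2 * ((1 + C α₃ * X + C α₂ * X ^ 2 + C α₁ * X ^ 3 + C α₀ * X ^ 4)
          * eulerD (eulerD (eulerD ψ)))
      + 3 * ((C α₃ * X + 2 * (C α₂ * X ^ 2) + 3 * (C α₁ * X ^ 3) + 4 * (C α₀ * X ^ 4))
          * eulerD (eulerD ψ))
      + ((C α₃ + 2 * C β₁) * X + (6 * C α₂ + 2 * C β₀) * X ^ 2
          + 13 * (C α₁ * X ^ 3) + 22 * (C α₀ * X ^ 4)) * eulerD ψ
      + (C β₁ * X + (2 * C α₂ + 2 * C β₀) * X ^ 2 + 6 * (C α₁ * X ^ 3)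
          + 12 * (C α₀ * X ^ 4)) * ψ)
      + (6 * ((1 + C α₃ * X + C α₂ * X ^ 2 + C α₁ * X ^ 3 + C α₀ * X ^ 4)
          * eulerD (eulerD φ₀))
      + 6 * ((C α₃ * X + 2 * (C α₂ * X ^ 2) + 3 * (C α₁ * X ^ 3) + 4 * (C α₀ * X ^ 4))
          * eulerD φ₀)
      + ((C α₃ + 2 * C β₁) * X + (6 * C α₂ + 2 * C β₀) * X ^ 2
          + 13 * (C α₁ * X ^ 3) + 22 * (C α₀ * X ^ 4)) * φ₀) = 0 := by
    linear_combination 2 * hLψ - key1 α₃ α₂ α₁ α₀ β₁ β₀ ψ - key2 α₃ α₂ α₁ α₀ β₁ β₀ φ₀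
  -- the first quadratic first integral Q1 vanishes
  have hdQ1 : eulerD (4 * ((1 + C α₃ * X + C α₂ * X ^ 2 + C α₁ * X ^ 3 + C α₀ * X ^ 4)
          * (φ₀ * eulerD (eulerD φ₀)))
      - 2 * ((1 + C α₃ * X + C α₂ * X ^ 2 + C α₁ * X ^ 3 + C α₀ * X ^ 4)
          * (eulerD φ₀ * eulerD φ₀))
      + 2 * ((C α₃ * X + 2 * (C α₂ * X ^ 2) + 3 * (C α₁ * X ^ 3) + 4 * (C α₀ * X ^ 4))
          * (φ₀ * eulerD φ₀))
      + (((C α₃ + 2 * C β₁) * X + (6 * C α₂ + 2 * C β₀) * X ^ 2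
          + 13 * (C α₁ * X ^ 3) + 22 * (C α₀ * X ^ 4))
        - (C α₃ * X + 4 * (C α₂ * X ^ 2) + 9 * (C α₁ * X ^ 3) + 16 * (C α₀ * X ^ 4)))
          * (φ₀ * φ₀)) = 0 := by
    rw [ident1 _ _ _ _ _ _ _ hdF hdF1 hdF2 hdB]
    linear_combination (2 * φ₀) * hE1
  have hQ1 : (4 * ((1 + C α₃ * X + C α₂ * X ^ 2 + C α₁ * X ^ 3 + C α₀ * X ^ 4)
          * (φ₀ * eulerD (eulerD φ₀)))
      - 2 * ((1 + C α₃ * X + C α₂ * X ^ 2 + C α₁ * X ^ 3 + C α₀ * X ^ 4)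
          * (eulerD φ₀ * eulerD φ₀))
      + 2 * ((C α₃ * X + 2 * (C α₂ * X ^ 2) + 3 * (C α₁ * X ^ 3) + 4 * (C α₀ * X ^ 4))
          * (φ₀ * eulerD φ₀))
      + (((C α₃ + 2 * C β₁) * X + (6 * C α₂ + 2 * C β₀) * X ^ 2
          + 13 * (C α₁ * X ^ 3) + 22 * (C α₀ * X ^ 4))
        - (C α₃ * X + 4 * (C α₂ * X ^ 2) + 9 * (C α₁ * X ^ 3) + 16 * (C α₀ * X ^ 4)))
          * (φ₀ * φ₀)) = 0 := by
    apply eq_zero_of_eulerD_eq_zero _ hdQ1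
    simp [map_add, map_sub, map_mul, map_pow, map_ofNat, constantCoeff_X, constantCoeff_C,
      constantCoeff_eulerD, hφ₀]
  -- the second (log-corrected) first integral Q2 vanishes
  have hdQ2 : eulerD (2 * ((1 + C α₃ * X + C α₂ * X ^ 2 + C α₁ * X ^ 3 + C α₀ * X ^ 4)
          * (ψ * eulerD (eulerD φ₀)))
      - 2 * ((1 + C α₃ * X + C α₂ * X ^ 2 + C α₁ * X ^ 3 + C α₀ * X ^ 4)
          * (eulerD φ₀ * eulerD ψ))
      + 2 * ((1 + C α₃ * X + C α₂ * X ^ 2 + C α₁ * X ^ 3 + C α₀ * X ^ 4)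
          * (φ₀ * eulerD (eulerD ψ)))
      + (C α₃ * X + 2 * (C α₂ * X ^ 2) + 3 * (C α₁ * X ^ 3) + 4 * (C α₀ * X ^ 4))
          * (φ₀ * eulerD ψ)
      + (C α₃ * X + 2 * (C α₂ * X ^ 2) + 3 * (C α₁ * X ^ 3) + 4 * (C α₀ * X ^ 4))
          * (eulerD φ₀ * ψ)
      + (((C α₃ + 2 * C β₁) * X + (6 * C α₂ + 2 * C β₀) * X ^ 2
          + 13 * (C α₁ * X ^ 3) + 22 * (C α₀ * X ^ 4))
        - (C α₃ * X + 4 * (C α₂ * X ^ 2) + 9 * (C α₁ * X ^ 3) + 16 * (C α₀ * X ^ 4)))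
          * (φ₀ * ψ)
      + 2 * ((1 + C α₃ * X + C α₂ * X ^ 2 + C α₁ * X ^ 3 + C α₀ * X ^ 4)
          * (φ₀ * eulerD φ₀))
      + (C α₃ * X + 2 * (C α₂ * X ^ 2) + 3 * (C α₁ * X ^ 3) + 4 * (C α₀ * X ^ 4))
          * (φ₀ * φ₀)) = 0 := by
    have h2 := ident2 (1 + C α₃ * X + C α₂ * X ^ 2 + C α₁ * X ^ 3 + C α₀ * X ^ 4)
      (C α₃ * X + 2 * (C α₂ * X ^ 2) + 3 * (C α₁ * X ^ 3) + 4 * (C α₀ * X ^ 4))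
      (C α₃ * X + 4 * (C α₂ * X ^ 2) + 9 * (C α₁ * X ^ 3) + 16 * (C α₀ * X ^ 4))
      (C α₃ * X + 8 * (C α₂ * X ^ 2) + 27 * (C α₁ * X ^ 3) + 64 * (C α₀ * X ^ 4))
      ((C α₃ + 2 * C β₁) * X + (6 * C α₂ + 2 * C β₀) * X ^ 2
          + 13 * (C α₁ * X ^ 3) + 22 * (C α₀ * X ^ 4))
      (C β₁ * X + (2 * C α₂ + 2 * C β₀) * X ^ 2 + 6 * (C α₁ * X ^ 3)
          + 12 * (C α₀ * X ^ 4))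
      φ₀ ψ hdF hdF1 hdF2 hdB
    linear_combination h2 + φ₀ * hE2 + ψ * hE1 - hQ1
  have hQ2 : (2 * ((1 + C α₃ * X + C α₂ * X ^ 2 + C α₁ * X ^ 3 + C α₀ * X ^ 4)
          * (ψ * eulerD (eulerD φ₀)))
      - 2 * ((1 + C α₃ * X + C α₂ * X ^ 2 + C α₁ * X ^ 3 + C α₀ * X ^ 4)
          * (eulerD φ₀ * eulerD ψ))
      + 2 * ((1 + C α₃ * X + C α₂ * X ^ 2 + C α₁ * X ^ 3 + C α₀ * X ^ 4)
          * (φ₀ * eulerD (eulerD ψ)))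
      + (C α₃ * X + 2 * (C α₂ * X ^ 2) + 3 * (C α₁ * X ^ 3) + 4 * (C α₀ * X ^ 4))
          * (φ₀ * eulerD ψ)
      + (C α₃ * X + 2 * (C α₂ * X ^ 2) + 3 * (C α₁ * X ^ 3) + 4 * (C α₀ * X ^ 4))
          * (eulerD φ₀ * ψ)
      + (((C α₃ + 2 * C β₁) * X + (6 * C α₂ + 2 * C β₀) * X ^ 2
          + 13 * (C α₁ * X ^ 3) + 22 * (C α₀ * X ^ 4))
        - (C α₃ * X + 4 * (C α₂ * X ^ 2) + 9 * (C α₁ * X ^ 3) + 16 * (C α₀ * X ^ 4)))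
          * (φ₀ * ψ)
      + 2 * ((1 + C α₃ * X + C α₂ * X ^ 2 + C α₁ * X ^ 3 + C α₀ * X ^ 4)
          * (φ₀ * eulerD φ₀))
      + (C α₃ * X + 2 * (C α₂ * X ^ 2) + 3 * (C α₁ * X ^ 3) + 4 * (C α₀ * X ^ 4))
          * (φ₀ * φ₀)) = 0 := by
    apply eq_zero_of_eulerD_eq_zero _ hdQ2
    simp [map_add, map_sub, map_mul, map_pow, map_ofNat, constantCoeff_X, constantCoeff_C,
      constantCoeff_eulerD, hφ₀, hψ]
  -- the main differential identity for H
  have h3 := ident3 (1 + C α₃ * X + C α₂ * X ^ 2 + C α₁ * X ^ 3 + C α₀ * X ^ 4)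
    (C α₃ * X + 2 * (C α₂ * X ^ 2) + 3 * (C α₁ * X ^ 3) + 4 * (C α₀ * X ^ 4))
    (C α₃ * X + 4 * (C α₂ * X ^ 2) + 9 * (C α₁ * X ^ 3) + 16 * (C α₀ * X ^ 4))
    ((C α₃ + 2 * C β₁) * X + (6 * C α₂ + 2 * C β₀) * X ^ 2
        + 13 * (C α₁ * X ^ 3) + 22 * (C α₀ * X ^ 4))
    φ₀ ψ _ _ _ _ hdF rfl rfl rfl rfl
  have heq : (2 * ((1 + C α₃ * X + C α₂ * X ^ 2 + C α₁ * X ^ 3 + C α₀ * X ^ 4) * φ₀))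
        * eulerD ((1 + C α₃ * X + C α₂ * X ^ 2 + C α₁ * X ^ 3 + C α₀ * X ^ 4)
          * ((φ₀ * φ₀ + eulerD ψ * φ₀ - ψ * eulerD φ₀)
            * (φ₀ * φ₀ + eulerD ψ * φ₀ - ψ * eulerD φ₀)) - φ₀ * φ₀)
      = (4 * ((1 + C α₃ * X + C α₂ * X ^ 2 + C α₁ * X ^ 3 + C α₀ * X ^ 4) * eulerD φ₀))
        * ((1 + C α₃ * X + C α₂ * X ^ 2 + C α₁ * X ^ 3 + C α₀ * X ^ 4)
          * ((φ₀ * φ₀ + eulerD ψ * φ₀ - ψ * eulerD φ₀)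
            * (φ₀ * φ₀ + eulerD ψ * φ₀ - ψ * eulerD φ₀)) - φ₀ * φ₀) := by
    linear_combination h3
      + (2 * ((1 + C α₃ * X + C α₂ * X ^ 2 + C α₁ * X ^ 3 + C α₀ * X ^ 4)
          * (φ₀ * (φ₀ * φ₀ + eulerD ψ * φ₀ - ψ * eulerD φ₀)))) * hQ2
      - (2 * ((1 + C α₃ * X + C α₂ * X ^ 2 + C α₁ * X ^ 3 + C α₀ * X ^ 4)
          * (ψ * (φ₀ * φ₀ + eulerD ψ * φ₀ - ψ * eulerD φ₀)))) * hQ1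
  have hH : (1 + C α₃ * X + C α₂ * X ^ 2 + C α₁ * X ^ 3 + C α₀ * X ^ 4)
        * ((φ₀ * φ₀ + eulerD ψ * φ₀ - ψ * eulerD φ₀)
          * (φ₀ * φ₀ + eulerD ψ * φ₀ - ψ * eulerD φ₀)) - φ₀ * φ₀ = 0 := by
    apply eulerD_cancel _ _ _ _ _ _ heq
    · simp [map_add, map_mul, map_pow, map_ofNat, constantCoeff_X, constantCoeff_C, hφ₀]
    · simp [map_add, map_mul, map_pow, map_ofNat, constantCoeff_X, constantCoeff_C,
        constantCoeff_eulerD]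
    · simp [map_add, map_sub, map_mul, map_pow, map_ofNat, constantCoeff_X, constantCoeff_C,
        constantCoeff_eulerD, hφ₀, hψ]
  linear_combination hH
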